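/- Let φ be a CNF formula with variables x_1,…,x_n and clauses C_1,…,C_m (each clause a set of at most three literals), and let G be the graph constructed from φ as described. Then X := {x_1,…,x_n, y_1} is a maximal 2-independent set of G and V(G) ∖ N[X] = {y_3}. -/
import Mathlib


/-- A set `X` is `r`-independent if between any two distinct vertices of `X`
there is no walk of length at most `r`. -/
def rIndependent {V : Type*} (G : SimpleGraph V) (r : ℕ) (X : Set V) : Prop :=
  ∀ x ∈ X, ∀ y ∈ X, x ≠ y → ∀ p : G.Walk x y, r < p.length

/-- The closed neighbourhood `N[X]` of a set of vertices `X`. -/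
def closedNbhdSet {V : Type*} (G : SimpleGraph V) (X : Set V) : Set V :=
  X ∪ ⋃ x ∈ X, G.neighborSet x

/-- Vertices of the graph built from a CNF formula with `n` variables and `m`
clauses: for each variable `i` a triangle `var i`, `pos i`, `neg i`; for each
clause `j` a vertex `cls j`; and three extra vertices `y1, y2, y3`. -/
inductive PhiVtx (n m : ℕ) where
  | var (i : Fin n)
  | pos (i : Fin n)
  | neg (i : Fin n)
  | cls (j : Fin m)
  | y1
  | y2
  | y3
  deriving DecidableEq, Fintype

/-- Base adjacency relation of the construction. -/
def phiRel {n m : ℕ} (C : Fin m → Finset (Fin n × Bool)) :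
    PhiVtx n m → PhiVtx n m → Prop
  | .var i, .pos i' => i = i'
  | .var i, .neg i' => i = i'
  | .pos i, .neg i' => i = i'
  | .cls j, .pos i => (i, true) ∈ C j
  | .cls j, .neg i => (i, false) ∈ C j
  | .y1, .cls _ => True
  | .y1, .y2 => True
  | .y2, .y3 => True
  | _, _ => False

/-- The graph constructed from the CNF formula. -/
def phiGraph {n m : ℕ} (C : Fin m → Finset (Fin n × Bool)) :
    SimpleGraph (PhiVtx n m) :=
  SimpleGraph.fromRel (phiRel C)

private lemma walk_le_two {V : Type*} {G : SimpleGraph V} {x y : V} (p : G.Walk x y)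
    (h : p.length ≤ 2) : x = y ∨ G.Adj x y ∨ ∃ v, G.Adj x v ∧ G.Adj v y := by
  cases p with
  | nil => exact Or.inl rfl
  | cons h1 q =>
    cases q with
    | nil => exact Or.inr (Or.inl h1)
    | cons h2 r =>
      cases r with
      | nil => exact Or.inr (Or.inr ⟨_, h1, h2⟩)
      | cons h3 s => simp [SimpleGraph.Walk.length_cons] at h

private lemma adj_var {n m : ℕ} {C : Fin m → Finset (Fin n × Bool)} {i : Fin n}
    {w : PhiVtx n m} (h : (phiGraph C).Adj (.var i) w) : w = .pos i ∨ w = .neg i := by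
  cases w <;> simp_all [phiGraph, phiRel]

private lemma adj_y1 {n m : ℕ} {C : Fin m → Finset (Fin n × Bool)}
    {w : PhiVtx n m} (h : (phiGraph C).Adj .y1 w) : (∃ j, w = .cls j) ∨ w = .y2 := by
  cases w <;> simp_all [phiGraph, phiRel]

/-- In the graph constructed from a CNF formula (clauses of size at most 3),
the set `X = {x₁,…,xₙ, y₁}` is a maximal `2`-independent set and the residual
set `V(G) ∖ N[X]` is exactly `{y₃}`. -/
theorem phiGraph_maximal_twoIndependent {n m : ℕ}
    (C : Fin m → Finset (Fin n × Bool)) (hC : ∀ j, (C j).card ≤ 3) :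
    let X : Set (PhiVtx n m) := {v | (∃ i, v = PhiVtx.var i) ∨ v = PhiVtx.y1}
    rIndependent (phiGraph C) 2 X ∧
      (∀ Y : Set (PhiVtx n m), X ⊆ Y → rIndependent (phiGraph C) 2 Y → Y = X) ∧
      Set.univ \ closedNbhdSet (phiGraph C) X = {PhiVtx.y3} := by
  intro X
  have key : rIndependent (phiGraph C) 2 X := by
    intro x hx y hy hxy p
    by_contra hlen
    push_neg at hlen
    rcases walk_le_two p hlen with h | h | ⟨v, h1, h2⟩
    · exact hxy h
    · rcases hx with ⟨i, rfl⟩ | rfl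
      · rcases adj_var h with h' | h' <;> (rcases hy with ⟨i', rfl⟩ | rfl <;> simp_all)
      · rcases adj_y1 h with ⟨j, h'⟩ | h' <;> (rcases hy with ⟨i', rfl⟩ | rfl <;> simp_all)
    · rcases hx with ⟨i, rfl⟩ | rfl
      · rcases adj_var h1 with rfl | rfl <;>
          (rcases hy with ⟨i', rfl⟩ | rfl
           · rcases adj_var h2.symm with h' | h' <;> simp_all
           · rcases adj_y1 h2.symm with ⟨j, h'⟩ | h' <;> simp_all)
      · rcases adj_y1 h1 with ⟨j, rfl⟩ | rfl <;>
          (rcases hy with ⟨i', rfl⟩ | rfl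
           · rcases adj_var h2.symm with h' | h' <;> simp_all
           · rcases adj_y1 h2.symm with ⟨j', h'⟩ | h' <;> simp_all)
  refine ⟨key, ?_, ?_⟩
  · intro Y hXY hY
    refine Set.Subset.antisymm (fun v hv => ?_) hXY
    cases v with
    | var i => exact Or.inl ⟨i, rfl⟩
    | y1 => exact Or.inr rfl
    | pos i =>
      have hadj : (phiGraph C).Adj (.pos i) (.var i) := by simp [phiGraph, phiRel]
      have := hY _ hv _ (hXY (Or.inl ⟨i, rfl⟩)) (by simp)
        (SimpleGraph.Walk.cons hadj SimpleGraph.Walk.nil)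
      simp at this
    | neg i =>
      have hadj : (phiGraph C).Adj (.neg i) (.var i) := by simp [phiGraph, phiRel]
      have := hY _ hv _ (hXY (Or.inl ⟨i, rfl⟩)) (by simp)
        (SimpleGraph.Walk.cons hadj SimpleGraph.Walk.nil)
      simp at this
    | cls j =>
      have hadj : (phiGraph C).Adj (.cls j) .y1 := by simp [phiGraph, phiRel]
      have := hY _ hv _ (hXY (Or.inr rfl)) (by simp)
        (SimpleGraph.Walk.cons hadj SimpleGraph.Walk.nil)
      simp at this
    | y2 =>
      have hadj : (phiGraph C).Adj .y2 .y1 := by simp [phiGraph, phiRel]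
      have := hY _ hv _ (hXY (Or.inr rfl)) (by simp)
        (SimpleGraph.Walk.cons hadj SimpleGraph.Walk.nil)
      simp at this
    | y3 =>
      have h1 : (phiGraph C).Adj .y3 .y2 := by simp [phiGraph, phiRel]
      have h2 : (phiGraph C).Adj .y2 .y1 := by simp [phiGraph, phiRel]
      have := hY _ hv _ (hXY (Or.inr rfl)) (by simp)
        (SimpleGraph.Walk.cons h1 (SimpleGraph.Walk.cons h2 SimpleGraph.Walk.nil))
      simp at this
  · ext v
    simp only [Set.mem_diff, Set.mem_univ, true_and, Set.mem_singleton_iff, closedNbhdSet,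
      Set.mem_union, Set.mem_iUnion, SimpleGraph.mem_neighborSet]
    constructor
    · intro h
      cases v with
      | var i => exact absurd (Or.inl (Or.inl ⟨i, rfl⟩)) h
      | y1 => exact absurd (Or.inl (Or.inr rfl)) h
      | pos i =>
        exact absurd (Or.inr ⟨_, Or.inl ⟨i, rfl⟩, by simp [phiGraph, phiRel]⟩) h
      | neg i =>
        exact absurd (Or.inr ⟨_, Or.inl ⟨i, rfl⟩, by simp [phiGraph, phiRel]⟩) h
      | cls j =>
        exact absurd (Or.inr ⟨_, Or.inr rfl, by simp [phiGraph, phiRel]⟩) h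
      | y2 =>
        exact absurd (Or.inr ⟨_, Or.inr rfl, by simp [phiGraph, phiRel]⟩) h
      | y3 => rfl
    · rintro rfl
      rintro (h | ⟨x, hx, hadj⟩)
      · rcases h with ⟨i, h⟩ | h <;> simp_all
      · rcases hx with ⟨i, rfl⟩ | rfl
        · rcases adj_var hadj with h | h <;> simp_all
        · rcases adj_y1 hadj with ⟨j, h⟩ | h <;> simp_all
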